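/- Let N be a positive integer and let x_1, ..., x_N be nonnegative real numbers in non-decreasing order with 0 ≤ x_1 ≤ x_2 ≤ ... ≤ x_N ≤ 1 and Σ_{i=1}^N x_i = 1. For any real exponents β_2 > β_1 > 0, and for every k with 1 ≤ k ≤ N, the normalized prefix sums satisfy (Σ_{i=1}^k x_i^{β_2}) / (Σ_{j=1}^N x_j^{β_2}) ≤ (Σ_{i=1}^k x_i^{β_1}) / (Σ_{j=1}^N x_j^{β_1}). Equivalently, the normalized power distribution with exponent β_2 is majorized by the one with exponent β_1. -/

import Mathlib

lemma pow_swap_le {a b β₁ β₂ : ℝ} (ha : 0 ≤ a) (hab : a ≤ b)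
    (hβ₁ : 0 < β₁) (hβ : β₁ < β₂) :
    a ^ β₂ * b ^ β₁ ≤ a ^ β₁ * b ^ β₂ := by
  rcases eq_or_lt_of_le ha with h0 | h0
  · rw [← h0, Real.zero_rpow (by linarith), Real.zero_rpow (ne_of_gt hβ₁), zero_mul, zero_mul]
  · have hb : 0 < b := lt_of_lt_of_le h0 hab
    have ha2 : a ^ β₂ = a ^ β₁ * a ^ (β₂ - β₁) := by
      rw [← Real.rpow_add h0]; ring_nf
    have hb2 : b ^ β₂ = b ^ β₁ * b ^ (β₂ - β₁) := by
      rw [← Real.rpow_add hb]; ring_nf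
    rw [ha2, hb2]
    have h1 : a ^ (β₂ - β₁) ≤ b ^ (β₂ - β₁) :=
      Real.rpow_le_rpow ha hab (by linarith)
    have h2 : (0:ℝ) ≤ a ^ β₁ := Real.rpow_nonneg ha _
    have h3 : (0:ℝ) ≤ b ^ β₁ := Real.rpow_nonneg hb.le _
    have h4 : (0:ℝ) ≤ a ^ (β₂ - β₁) := Real.rpow_nonneg ha _
    nlinarith [mul_le_mul_of_nonneg_left h1 (mul_nonneg h2 h3)]

theorem enhancedERA_majorization
    (N : ℕ) (hN : 0 < N) (x : ℕ → ℝ)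
    (hnonneg : ∀ i, i < N → 0 ≤ x i)
    (hle1 : ∀ i, i < N → x i ≤ 1)
    (hmono : ∀ i j, i ≤ j → j < N → x i ≤ x j)
    (hsum : ∑ i ∈ Finset.range N, x i = 1)
    (β₁ β₂ : ℝ) (hβ₁ : 0 < β₁) (hβ : β₁ < β₂)
    (k : ℕ) (hk1 : 1 ≤ k) (hkN : k ≤ N) :
    (∑ i ∈ Finset.range k, x i ^ β₂) / (∑ j ∈ Finset.range N, x j ^ β₂)
      ≤ (∑ i ∈ Finset.range k, x i ^ β₁) / (∑ j ∈ Finset.range N, x j ^ β₁) := by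
  have hβ₂ : 0 < β₂ := hβ₁.trans hβ
  -- there is a positive entry
  obtain ⟨i₀, hi₀, hxi₀⟩ : ∃ i ∈ Finset.range N, 0 < x i := by
    by_contra h
    push_neg at h
    have : ∑ i ∈ Finset.range N, x i ≤ 0 := Finset.sum_nonpos fun i hi => h i hi
    linarith
  have hi₀N := Finset.mem_range.mp hi₀
  have hBpos : ∀ β : ℝ, 0 < β → 0 < ∑ j ∈ Finset.range N, x j ^ β := by
    intro β hβpos
    apply Finset.sum_pos' (fun j hj => Real.rpow_nonneg (hnonneg j (Finset.mem_range.mp hj)) β)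
    exact ⟨i₀, hi₀, Real.rpow_pos_of_pos hxi₀ β⟩
  have hB₁ := hBpos β₁ hβ₁
  have hB₂ := hBpos β₂ hβ₂
  rw [div_le_div_iff₀ hB₂ hB₁]
  -- split total sums into prefix + tail
  have hsplit : ∀ β : ℝ, (∑ j ∈ Finset.range N, x j ^ β)
      = (∑ i ∈ Finset.range k, x i ^ β) + (∑ j ∈ Finset.Ico k N, x j ^ β) := by
    intro β
    rw [Finset.range_eq_Ico,
      ← Finset.sum_Ico_consecutive _ (Nat.zero_le k) hkN, Finset.range_eq_Ico]
  rw [hsplit β₁, hsplit β₂, mul_add, mul_add]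
  apply add_le_add
  · rw [mul_comm]
  · -- cross term: A₂ * T₁ ≤ A₁ * T₂
    rw [Finset.sum_mul_sum, Finset.sum_mul_sum]
    apply Finset.sum_le_sum
    intro i hi
    apply Finset.sum_le_sum
    intro j hj
    have hiK := Finset.mem_range.mp hi
    obtain ⟨hkj, hjN⟩ := Finset.mem_Ico.mp hj
    exact pow_swap_le (hnonneg i (lt_of_lt_of_le hiK hkN))
      (hmono i j (le_trans hiK.le hkj) hjN) hβ₁ hβ
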